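/- Let J_n be the flower snark of order n = 4k (k odd, k ≥ 3). Then F_c(J_n) ≤ n/4 + 2 = k + 2. Explicitly, the set {C_1,...,C_k, A_1, D_1} is a connected forcing set of J_n. -/

import Mathlib

open SimpleGraph

/-- A vertex is (eventually) colored in the forcing process starting from `S`:
either it is in `S`, or some colored vertex `u` adjacent to it has all of its
other neighbors colored, so `u` forces it. -/
inductive SimpleGraph.Forced {V : Type*} (G : SimpleGraph V) (S : Set V) : V → Prop
  | init {v : V} (hv : v ∈ S) : G.Forced S v
  | force {u w : V} (hu : G.Forced S u) (hadj : G.Adj u w)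
      (hothers : ∀ x, G.Adj u x → x ≠ w → G.Forced S x) : G.Forced S w

/-- `S` is a (zero) forcing set of `G`. -/
def SimpleGraph.IsForcingSet {V : Type*} (G : SimpleGraph V) (S : Set V) : Prop :=
  ∀ v, G.Forced S v

/-- `S` is a connected forcing set of `G`. -/
def SimpleGraph.IsConnForcingSet {V : Type*} (G : SimpleGraph V) (S : Set V) : Prop :=
  G.IsForcingSet S ∧ (G.induce S).Connected

/-- The (zero) forcing number `F(G)`. -/
noncomputable def SimpleGraph.zfNum {V : Type*} (G : SimpleGraph V) : ℕ :=
  sInf {n | ∃ S : Set V, S.ncard = n ∧ G.IsForcingSet S}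

/-- The connected forcing number `F_c(G)`. -/
noncomputable def SimpleGraph.czfNum {V : Type*} (G : SimpleGraph V) : ℕ :=
  sInf {n | ∃ S : Set V, S.ncard = n ∧ G.IsConnForcingSet S}

/-- `G` is a path graph. -/
def SimpleGraph.IsPathGraph {V : Type*} (G : SimpleGraph V) : Prop :=
  ∃ n : ℕ, Nonempty (G ≃g SimpleGraph.pathGraph n)

/-- Deletion of a vertex. -/
def SimpleGraph.delVert {V : Type*} (G : SimpleGraph V) (v : V) :
    SimpleGraph {w : V // w ≠ v} :=
  G.induce {w : V | w ≠ v}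

/-- `v` is a leaf (degree-1 vertex) of `G`. -/
def SimpleGraph.IsLeaf {V : Type*} (G : SimpleGraph V) (v : V) : Prop :=
  (G.neighborSet v).ncard = 1

/-- The flower snark `J_{4k}`.  A vertex `(j, t)` is `A_j, B_j, C_j, D_j`
according to `t = 0, 1, 2, 3`. -/
def flowerSnark (k : ℕ) : SimpleGraph (Fin k × Fin 4) :=
  SimpleGraph.fromRel fun a b =>
    (a.1 = b.1 ∧ a.2 = 0 ∧ b.2 ≠ 0) ∨                                 -- star edges
    (a.2 = 1 ∧ b.2 = 1 ∧ ((a.1 : ℕ) + 1) % k = (b.1 : ℕ)) ∨           -- B-cycle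
    (a.2 = 2 ∧ b.2 = 2 ∧ (a.1 : ℕ) + 1 = (b.1 : ℕ)) ∨                 -- C-path
    (a.2 = 3 ∧ b.2 = 3 ∧ (a.1 : ℕ) + 1 = (b.1 : ℕ)) ∨                 -- D-path
    (a.2 = 2 ∧ b.2 = 3 ∧ (a.1 : ℕ) = k - 1 ∧ (b.1 : ℕ) = 0) ∨         -- C_k ~ D_1
    (a.2 = 3 ∧ b.2 = 2 ∧ (a.1 : ℕ) = k - 1 ∧ (b.1 : ℕ) = 0)           -- D_k ~ C_1

namespace FlowerAux

variable {k : ℕ}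

def R (k : ℕ) (a b : Fin k × Fin 4) : Prop :=
  (a.1 = b.1 ∧ a.2 = 0 ∧ b.2 ≠ 0) ∨
  (a.2 = 1 ∧ b.2 = 1 ∧ ((a.1 : ℕ) + 1) % k = (b.1 : ℕ)) ∨
  (a.2 = 2 ∧ b.2 = 2 ∧ (a.1 : ℕ) + 1 = (b.1 : ℕ)) ∨
  (a.2 = 3 ∧ b.2 = 3 ∧ (a.1 : ℕ) + 1 = (b.1 : ℕ)) ∨
  (a.2 = 2 ∧ b.2 = 3 ∧ (a.1 : ℕ) = k - 1 ∧ (b.1 : ℕ) = 0) ∨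
  (a.2 = 3 ∧ b.2 = 2 ∧ (a.1 : ℕ) = k - 1 ∧ (b.1 : ℕ) = 0)

lemma fs_adj {a b : Fin k × Fin 4} :
    (flowerSnark k).Adj a b ↔ a ≠ b ∧ (R k a b ∨ R k b a) :=
  fromRel_adj _ a b

def SS (hk : 0 < k) : Set (Fin k × Fin 4) :=
  {p : Fin k × Fin 4 | p.2 = 2} ∪ {(⟨0, hk⟩, 0), (⟨0, hk⟩, 3)}

lemma memC (hk : 0 < k) (j : Fin k) : ((j, 2) : Fin k × Fin 4) ∈ SS hk := Or.inl rfl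
lemma memA0 (hk : 0 < k) : (((⟨0, hk⟩ : Fin k), (0 : Fin 4)) : Fin k × Fin 4) ∈ SS hk :=
  Or.inr (Or.inl rfl)
lemma memD0 (hk : 0 < k) : (((⟨0, hk⟩ : Fin k), (3 : Fin 4)) : Fin k × Fin 4) ∈ SS hk :=
  Or.inr (Or.inr rfl)

lemma forcedA (hk : 3 ≤ k) (j : Fin k) :
    (flowerSnark k).Forced (SS (show 0 < k from Nat.lt_of_lt_of_le (by norm_num) hk)) (j, (0 : Fin 4)) := by
  have h0 : 0 < k := by omega
  by_cases hj : j = ⟨0, h0⟩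
  · subst hj; exact .init (memA0 h0)
  · refine .force (u := (j, 2)) (.init (memC h0 j)) ?_ ?_
    · exact fs_adj.mpr ⟨by simp, Or.inr (Or.inl ⟨rfl, rfl, by simp⟩)⟩
    · rintro ⟨x1, x2⟩ hx hne
      rw [fs_adj] at hx
      obtain ⟨hxx, h | h⟩ := hx
      · rcases h with ⟨-, h2, -⟩ | ⟨h1, -⟩ | ⟨-, h2, -⟩ | ⟨h1, -⟩ | ⟨-, h2, h3, h4⟩ | ⟨h1, -⟩
        · exact absurd h2 (by simp)
        · exact absurd h1 (by simp)
        · exact .init (Or.inl h2)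
        · exact absurd h1 (by simp)
        · have hx1 : x1 = ⟨0, h0⟩ := Fin.ext h4
          subst hx1; subst h2
          exact .init (memD0 h0)
        · exact absurd h1 (by simp)
      · rcases h with ⟨h1, h2, -⟩ | ⟨-, h2, -⟩ | ⟨h1, -, -⟩ | ⟨-, h2, -⟩ | ⟨h1, -⟩ | ⟨h1, h2, h3, h4⟩
        · subst h1; subst h2; exact absurd rfl hne
        · exact absurd h2 (by simp)
        · exact .init (Or.inl h1)
        · exact absurd h2 (by simp)
        · exact .init (Or.inl h1)
        · exact absurd (Fin.ext h4) hj

lemma forcedD (hk : 3 ≤ k) : ∀ n (hn : n < k),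
    (flowerSnark k).Forced (SS (show 0 < k from Nat.lt_of_lt_of_le (by norm_num) hk)) ((⟨n, hn⟩ : Fin k), (3 : Fin 4)) := by
  have h0 : 0 < k := by omega
  intro n
  induction n using Nat.strong_induction_on with
  | _ n ih =>
  intro hn
  rcases n with _ | m
  · exact .init (memD0 h0)
  · have hm : m < k := by omega
    refine .force (u := ((⟨m, hm⟩ : Fin k), (3 : Fin 4))) (ih m (by omega) hm) ?_ ?_
    · refine fs_adj.mpr ⟨?_, Or.inl (Or.inr (Or.inr (Or.inr (Or.inl ⟨rfl, rfl, rfl⟩))))⟩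
      intro h
      have hmm : (m : ℕ) = m + 1 := congrArg (fun p : Fin k × Fin 4 => (p.1 : ℕ)) h
      omega
    · rintro ⟨x1, x2⟩ hx hne
      rw [fs_adj] at hx
      obtain ⟨hxx, h | h⟩ := hx
      · rcases h with ⟨-, h2, -⟩ | ⟨h1, -⟩ | ⟨h1, -⟩ | ⟨-, h2, h3⟩ | ⟨h1, -⟩ | ⟨-, h2, -⟩
        · exact absurd h2 (by simp)
        · exact absurd h1 (by simp)
        · exact absurd h1 (by simp)
        · -- x = (⟨m+1⟩, 3) = w
          exfalso; apply hne
          subst h2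
          have : x1 = (⟨m + 1, hn⟩ : Fin k) := Fin.ext h3.symm
          rw [this]
        · exact absurd h1 (by simp)
        · exact .init (Or.inl h2)
      · rcases h with ⟨h1, h2, -⟩ | ⟨-, h2, -⟩ | ⟨-, h2, -⟩ | ⟨h1, -, h3⟩ | ⟨h1, -⟩ | ⟨-, h2, -⟩
        · subst h1; subst h2; exact forcedA hk _
        · exact absurd h2 (by simp)
        · exact absurd h2 (by simp)
        · -- x = (x1, 3) with x1.val + 1 = m
          subst h1
          have h3' : (x1 : ℕ) + 1 = m := h3
          have := ih x1.val (by omega) x1.isLt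
          rwa [Fin.eta] at this
        · exact .init (Or.inl h1)
        · exact absurd h2 (by simp)

lemma forcedB (hk : 3 ≤ k) (j : Fin k) :
    (flowerSnark k).Forced (SS (show 0 < k from Nat.lt_of_lt_of_le (by norm_num) hk)) (j, (1 : Fin 4)) := by
  have h0 : 0 < k := by omega
  refine .force (u := (j, (0 : Fin 4))) (forcedA hk j) ?_ ?_
  · exact fs_adj.mpr ⟨by simp, Or.inl (Or.inl ⟨rfl, rfl, by simp⟩)⟩
  · rintro ⟨x1, x2⟩ hx hne
    rw [fs_adj] at hx
    obtain ⟨hxx, h | h⟩ := hx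
    · rcases h with ⟨h1, -, h3⟩ | ⟨h1, -⟩ | ⟨h1, -⟩ | ⟨h1, -⟩ | ⟨h1, -⟩ | ⟨h1, -⟩
      · -- h1 : j = x1, h3 : x2 ≠ 0
        subst h1
        fin_cases x2
        · exact absurd rfl h3
        · exact absurd rfl hne
        · exact .init (Or.inl rfl)
        · have := forcedD hk j.val j.isLt
          rwa [Fin.eta] at this
      · exact absurd h1 (by simp)
      · exact absurd h1 (by simp)
      · exact absurd h1 (by simp)
      · exact absurd h1 (by simp)
      · exact absurd h1 (by simp)
    · rcases h with ⟨-, -, h3⟩ | ⟨-, h2, -⟩ | ⟨-, h2, -⟩ | ⟨-, h2, -⟩ | ⟨-, h2, -⟩ | ⟨-, h2, -⟩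
      · exact absurd rfl h3
      · exact absurd h2 (by simp)
      · exact absurd h2 (by simp)
      · exact absurd h2 (by simp)
      · exact absurd h2 (by simp)
      · exact absurd h2 (by simp)

lemma forcedAll (hk : 3 ≤ k) :
    ∀ v, (flowerSnark k).Forced (SS (show 0 < k from Nat.lt_of_lt_of_le (by norm_num) hk)) v := by
  have h0 : 0 < k := by omega
  rintro ⟨j, t⟩
  fin_cases t
  · exact forcedA hk j
  · exact forcedB hk j
  · exact .init (Or.inl rfl)
  · have := forcedD hk j.val j.isLt
    rwa [Fin.eta] at this

lemma reachC (hk : 3 ≤ k) :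
    ∀ n (hn : n < k),
      ((flowerSnark k).induce (SS (show 0 < k from Nat.lt_of_lt_of_le (by norm_num) hk))).Reachable
        ⟨((⟨0, Nat.lt_of_lt_of_le (by norm_num) hk⟩ : Fin k), 2), memC (Nat.lt_of_lt_of_le (by norm_num) hk) _⟩
        ⟨((⟨n, hn⟩ : Fin k), 2), memC (Nat.lt_of_lt_of_le (by norm_num) hk) _⟩ := by
  have h0 : 0 < k := by omega
  intro n
  induction n with
  | zero => intro hn; exact Reachable.refl _
  | succ m ih =>
    intro hn
    have hm : m < k := by omega
    refine (ih hm).trans (Adj.reachable ?_)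
    show (flowerSnark k).Adj ((⟨m, hm⟩ : Fin k), 2) ((⟨m + 1, hn⟩ : Fin k), 2)
    refine fs_adj.mpr ⟨?_, Or.inl (Or.inr (Or.inr (Or.inl ⟨rfl, rfl, rfl⟩)))⟩
    intro h
    have hmm : (m : ℕ) = m + 1 := congrArg (fun p : Fin k × Fin 4 => (p.1 : ℕ)) h
    omega

lemma connS (hk : 3 ≤ k) :
    ((flowerSnark k).induce (SS (show 0 < k from Nat.lt_of_lt_of_le (by norm_num) hk))).Connected := by
  have h0 : 0 < k := by omega
  rw [connected_iff]
  refine ⟨?_, ⟨⟨((⟨0, h0⟩ : Fin k), 2), memC h0 _⟩⟩⟩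
  have hA : ((flowerSnark k).induce (SS (show 0 < k from Nat.lt_of_lt_of_le (by norm_num) hk))).Reachable
      ⟨((⟨0, h0⟩ : Fin k), 2), memC h0 _⟩ ⟨((⟨0, h0⟩ : Fin k), 0), memA0 h0⟩ := by
    refine Adj.reachable ?_
    show (flowerSnark k).Adj ((⟨0, h0⟩ : Fin k), 2) ((⟨0, h0⟩ : Fin k), 0)
    exact fs_adj.mpr ⟨by simp, Or.inr (Or.inl ⟨rfl, rfl, by simp⟩)⟩
  have hD : ((flowerSnark k).induce (SS (show 0 < k from Nat.lt_of_lt_of_le (by norm_num) hk))).Reachable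
      ⟨((⟨0, h0⟩ : Fin k), 2), memC h0 _⟩ ⟨((⟨0, h0⟩ : Fin k), 3), memD0 h0⟩ := by
    refine hA.trans (Adj.reachable ?_)
    show (flowerSnark k).Adj ((⟨0, h0⟩ : Fin k), 0) ((⟨0, h0⟩ : Fin k), 3)
    exact fs_adj.mpr ⟨by simp, Or.inl (Or.inl ⟨rfl, rfl, by simp⟩)⟩
  have hbase : ∀ v : SS (show 0 < k from Nat.lt_of_lt_of_le (by norm_num) hk : 0 < k),
      ((flowerSnark k).induce (SS (show 0 < k from Nat.lt_of_lt_of_le (by norm_num) hk))).Reachable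
        ⟨((⟨0, h0⟩ : Fin k), 2), memC h0 _⟩ v := by
    rintro ⟨⟨x1, x2⟩, hx⟩
    have hx' := hx
    rcases hx' with hx' | hx' | hx'
    · -- x2 = 2
      have h2 : x2 = 2 := hx'
      subst h2
      have he : (⟨(x1, 2), hx⟩ : SS (show 0 < k from Nat.lt_of_lt_of_le (by norm_num) hk : 0 < k)) =
          ⟨((⟨x1.val, x1.isLt⟩ : Fin k), 2), memC h0 _⟩ := by
        apply Subtype.ext
        show (x1, (2 : Fin 4)) = ((⟨x1.val, x1.isLt⟩ : Fin k), (2 : Fin 4))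
        rw [Fin.eta]
      rw [he]
      exact reachC hk x1.val x1.isLt
    · have he : (⟨(x1, x2), hx⟩ : SS (show 0 < k from Nat.lt_of_lt_of_le (by norm_num) hk : 0 < k)) =
          ⟨((⟨0, h0⟩ : Fin k), 0), memA0 h0⟩ := Subtype.ext hx'
      rw [he]; exact hA
    · have he : (⟨(x1, x2), hx⟩ : SS (show 0 < k from Nat.lt_of_lt_of_le (by norm_num) hk : 0 < k)) =
          ⟨((⟨0, h0⟩ : Fin k), 3), memD0 h0⟩ := Subtype.ext hx'
      rw [he]; exact hD
  intro u v
  exact (hbase u).symm.trans (hbase v)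

lemma cardS (hk : 3 ≤ k) : (SS (show 0 < k from Nat.lt_of_lt_of_le (by norm_num) hk) : Set (Fin k × Fin 4)).ncard = k + 2 := by
  have h0 : 0 < k := by omega
  have h1 : {p : Fin k × Fin 4 | p.2 = 2} = (fun j : Fin k => (j, (2 : Fin 4))) '' Set.univ := by
    ext ⟨a, b⟩
    simp only [Set.mem_setOf_eq, Set.image_univ, Set.mem_range, Prod.mk.injEq]
    constructor
    · rintro rfl; exact ⟨a, rfl, rfl⟩
    · rintro ⟨j, -, rfl⟩; rfl
  have hdisj : Disjoint {p : Fin k × Fin 4 | p.2 = 2}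
      ({((⟨0, h0⟩ : Fin k), (0 : Fin 4)), ((⟨0, h0⟩ : Fin k), (3 : Fin 4))} : Set (Fin k × Fin 4)) := by
    rw [Set.disjoint_left]
    rintro p hp (hq | hq) <;> (subst hq; simp at hp)
  rw [SS, Set.ncard_union_eq hdisj (Set.toFinite _) (Set.toFinite _), h1,
    Set.ncard_image_of_injective _ (fun a b h => by simpa using h), Set.ncard_univ,
    Nat.card_eq_fintype_card, Fintype.card_fin, Set.ncard_pair (by simp)]

end FlowerAux

theorem flowerSnark_connected_forcing (k : ℕ) (hk : 3 ≤ k) (hodd : Odd k) :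
    (flowerSnark k).IsConnForcingSet
      ({p : Fin k × Fin 4 | p.2 = 2} ∪
        {(⟨0, by omega⟩, 0), (⟨0, by omega⟩, 3)}) ∧
      (flowerSnark k).czfNum ≤ k + 2 := by
  have h0 : 0 < k := by omega
  constructor
  · exact ⟨FlowerAux.forcedAll hk, FlowerAux.connS hk⟩
  · apply Nat.sInf_le
    exact ⟨FlowerAux.SS h0, FlowerAux.cardS hk, FlowerAux.forcedAll hk, FlowerAux.connS hk⟩
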